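/- Comparison of homogeneous in the bi-limit functions: Let φ : ℝⁿ → ℝ and ζ : ℝⁿ → ℝ₊ be continuous functions, homogeneous in the bi-limit with the same weights r₀, r_∞, degrees d_{φ,0}, d_{φ,∞} and d_{ζ,0}, d_{ζ,∞}, and approximating functions φ₀, φ_∞, ζ₀, ζ_∞. If d_{φ,0} ≥ d_{ζ,0}, d_{φ,∞} ≤ d_{ζ,∞}, and ζ, ζ₀, ζ_∞ are positive definite (positive away from 0 and zero at 0), then there exists c > 0 such that φ(x) ≤ c·ζ(x) for all x ∈ ℝⁿ. -/

import Mathlib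

noncomputable def dil {n : ℕ} (r : Fin n → ℝ) (l : ℝ) (x : Fin n → ℝ) : Fin n → ℝ :=
  fun i => l ^ (r i) * x i

/-- `φ` is homogeneous in the 0-limit with associated triple `(r, d, φ₀)`. -/
def Homog0 {n : ℕ} (r : Fin n → ℝ) (d : ℝ) (φ φ₀ : (Fin n → ℝ) → ℝ) : Prop :=
  Continuous φ ∧ Continuous φ₀ ∧ φ₀ ≠ 0 ∧
    ∀ C : Set (Fin n → ℝ), IsCompact C → (0 : Fin n → ℝ) ∉ C →
      ∀ ε > (0:ℝ), ∃ l₀ > (0:ℝ), ∀ x ∈ C, ∀ l : ℝ, 0 < l → l ≤ l₀ →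
        |φ (dil r l x) / l ^ d - φ₀ x| ≤ ε

/-- `φ` is homogeneous in the ∞-limit with associated triple `(r, d, φinf)`. -/
def HomogInf {n : ℕ} (r : Fin n → ℝ) (d : ℝ) (φ φinf : (Fin n → ℝ) → ℝ) : Prop :=
  Continuous φ ∧ Continuous φinf ∧ φinf ≠ 0 ∧
    ∀ C : Set (Fin n → ℝ), IsCompact C → (0 : Fin n → ℝ) ∉ C →
      ∀ ε > (0:ℝ), ∃ linf > (0:ℝ), ∀ x ∈ C, ∀ l : ℝ, l ≥ linf →
        |φ (dil r l x) / l ^ d - φinf x| ≤ ε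

open Real Filter

noncomputable def hnorm {n : ℕ} (r : Fin n → ℝ) (x : Fin n → ℝ) : ℝ :=
  ∑ i, |x i| ^ (r i)⁻¹

lemma hnorm_nonneg {n : ℕ} (r : Fin n → ℝ) (x : Fin n → ℝ) : 0 ≤ hnorm r x :=
  Finset.sum_nonneg fun i _ => Real.rpow_nonneg (abs_nonneg _) _

lemma hnorm_continuous {n : ℕ} (r : Fin n → ℝ) (hr : ∀ i, 0 < r i) :
    Continuous (hnorm r) := by
  apply continuous_finset_sum
  intro i _
  exact ((continuous_apply i).abs).rpow_const fun x => Or.inr (inv_nonneg.2 (hr i).le)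

lemma hnorm_eq_zero {n : ℕ} (r : Fin n → ℝ) (hr : ∀ i, 0 < r i) (x : Fin n → ℝ) :
    hnorm r x = 0 ↔ x = 0 := by
  constructor
  · intro h
    funext i
    have := (Finset.sum_eq_zero_iff_of_nonneg
      (fun j _ => Real.rpow_nonneg (abs_nonneg (x j)) _)).1 h i (Finset.mem_univ i)
    have hx : |x i| = 0 := by
      by_contra hne
      exact hne (by
        have := Real.rpow_eq_zero (abs_nonneg (x i)) (inv_ne_zero (hr i).ne') |>.1 this
        exact this)
    simpa using abs_eq_zero.1 hx
  · intro h
    subst h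
    simp [hnorm, Real.zero_rpow (inv_ne_zero (hr _).ne')]

lemma hnorm_pos {n : ℕ} (r : Fin n → ℝ) (hr : ∀ i, 0 < r i) {x : Fin n → ℝ} (hx : x ≠ 0) :
    0 < hnorm r x :=
  lt_of_le_of_ne (hnorm_nonneg r x) (fun h => hx ((hnorm_eq_zero r hr x).1 h.symm))

lemma hnorm_dil {n : ℕ} (r : Fin n → ℝ) (hr : ∀ i, 0 < r i) {l : ℝ} (hl : 0 < l)
    (x : Fin n → ℝ) : hnorm r (dil r l x) = l * hnorm r x := by
  unfold hnorm dil
  rw [Finset.mul_sum]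
  apply Finset.sum_congr rfl
  intro i _
  have h1 : 0 < l ^ r i := Real.rpow_pos_of_pos hl _
  rw [abs_mul, abs_of_pos h1, Real.mul_rpow h1.le (abs_nonneg _),
    ← Real.rpow_mul hl.le, mul_inv_cancel₀ (hr i).ne', Real.rpow_one]

lemma dil_dil_inv {n : ℕ} (r : Fin n → ℝ) {l : ℝ} (hl : 0 < l) (x : Fin n → ℝ) :
    dil r l (dil r l⁻¹ x) = x := by
  funext i
  show l ^ r i * ((l⁻¹) ^ r i * x i) = x i
  rw [← mul_assoc, ← Real.mul_rpow hl.le (inv_nonneg.2 hl.le), mul_inv_cancel₀ hl.ne',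
    Real.one_rpow, one_mul]

lemma abs_le_of_hnorm_le {n : ℕ} (r : Fin n → ℝ) (hr : ∀ i, 0 < r i) {L : ℝ}
    {x : Fin n → ℝ} (h : hnorm r x ≤ L) (i : Fin n) : |x i| ≤ max 1 (L ^ r i) := by
  have hterm : |x i| ^ (r i)⁻¹ ≤ L :=
    le_trans (Finset.single_le_sum (f := fun j => |x j| ^ (r j)⁻¹)
      (fun j _ => Real.rpow_nonneg (abs_nonneg (x j)) _) (Finset.mem_univ i)) h
  rcases le_or_gt |x i| 1 with h1 | h1
  · exact le_max_of_le_left h1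
  · refine le_max_of_le_right ?_
    have h2 : (|x i| ^ (r i)⁻¹) ^ (r i) ≤ L ^ r i :=
      Real.rpow_le_rpow (Real.rpow_nonneg (abs_nonneg _) _) hterm (hr i).le
    rwa [← Real.rpow_mul (abs_nonneg _), inv_mul_cancel₀ (hr i).ne', Real.rpow_one] at h2

lemma isBounded_sublevel {n : ℕ} (r : Fin n → ℝ) (hr : ∀ i, 0 < r i) (L : ℝ) :
    Bornology.IsBounded {x : Fin n → ℝ | hnorm r x ≤ L} := by
  set R := ∑ j, max 1 (L ^ r j) with hRdef
  have hR : 0 ≤ R := Finset.sum_nonneg fun j _ => le_trans zero_le_one (le_max_left _ _)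
  apply (Metric.isBounded_closedBall (x := (0 : Fin n → ℝ)) (r := R)).subset
  intro x hx
  rw [Metric.mem_closedBall, dist_pi_le_iff hR]
  intro i
  rw [Real.dist_eq, Pi.zero_apply, sub_zero]
  calc |x i| ≤ max 1 (L ^ r i) := abs_le_of_hnorm_le r hr hx i
    _ ≤ R := Finset.single_le_sum (f := fun j => max 1 (L ^ r j))
        (fun j _ => le_trans zero_le_one (le_max_left _ _)) (Finset.mem_univ i)

lemma isCompact_of_sub {n : ℕ} (r : Fin n → ℝ) (hr : ∀ i, 0 < r i) (L : ℝ)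
    {s : Set (Fin n → ℝ)} (hc : IsClosed s) (hsub : s ⊆ {x | hnorm r x ≤ L}) :
    IsCompact s :=
  Metric.isCompact_of_isClosed_isBounded hc ((isBounded_sublevel r hr L).subset hsub)
open Real Filter Topology

theorem comparison_bilimit {n : ℕ} (r0 rinf : Fin n → ℝ)
    (hr0 : ∀ i, 0 < r0 i) (hrinf : ∀ i, 0 < rinf i)
    (dφ0 dφinf dζ0 dζinf : ℝ)
    (φ ζ φ0 φinf ζ0 ζinf : (Fin n → ℝ) → ℝ)
    (hζnn : ∀ x, 0 ≤ ζ x)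
    (hφ0 : Homog0 r0 dφ0 φ φ0) (hφinf : HomogInf rinf dφinf φ φinf)
    (hζ0 : Homog0 r0 dζ0 ζ ζ0) (hζinf : HomogInf rinf dζinf ζ ζinf)
    (hd0 : dφ0 ≥ dζ0) (hdinf : dφinf ≤ dζinf)
    (hζpd : ζ 0 = 0 ∧ ∀ x ≠ 0, 0 < ζ x)
    (hζ0pd : ζ0 0 = 0 ∧ ∀ x ≠ 0, 0 < ζ0 x)
    (hζinfpd : ζinf 0 = 0 ∧ ∀ x ≠ 0, 0 < ζinf x) :
    ∃ c > (0:ℝ), ∀ x : Fin n → ℝ, φ x ≤ c * ζ x := by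
  classical
  obtain ⟨hφc, hφ0c, _, hφ0h⟩ := hφ0
  obtain ⟨_, hφinfc, _, hφinfh⟩ := hφinf
  obtain ⟨hζc, hζ0c, hζ0ne, hζ0h⟩ := hζ0
  obtain ⟨_, hζinfc, _, hζinfh⟩ := hζinf
  rcases Nat.eq_zero_or_pos n with hn | hn
  · exfalso
    subst hn
    apply hζ0ne
    funext x
    have hx0 : x = 0 := funext fun i => i.elim0
    rw [hx0, hζ0pd.1, Pi.zero_apply]
  -- notation
  set N0 : (Fin n → ℝ) → ℝ := hnorm r0 with hN0def
  set Ni : (Fin n → ℝ) → ℝ := hnorm rinf with hNidef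
  -- the two unit spheres
  set S0 : Set (Fin n → ℝ) := {x | N0 x = 1} with hS0def
  set Si : Set (Fin n → ℝ) := {x | Ni x = 1} with hSidef
  have hS0c : IsCompact S0 := isCompact_of_sub r0 hr0 1
    (isClosed_singleton.preimage (hnorm_continuous r0 hr0)) (fun x hx => le_of_eq hx)
  have hSic : IsCompact Si := isCompact_of_sub rinf hrinf 1
    (isClosed_singleton.preimage (hnorm_continuous rinf hrinf)) (fun x hx => le_of_eq hx)
  have hS0zero : (0 : Fin n → ℝ) ∉ S0 := by
    simp only [hS0def, Set.mem_setOf_eq, hN0def, (hnorm_eq_zero r0 hr0 0).2 rfl]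
    norm_num
  have hSizero : (0 : Fin n → ℝ) ∉ Si := by
    simp only [hSidef, Set.mem_setOf_eq, hNidef, (hnorm_eq_zero rinf hrinf 0).2 rfl]
    norm_num
  have hmemne : ∀ (r : Fin n → ℝ), (∀ i, 0 < r i) → ∃ y : Fin n → ℝ, hnorm r y = 1 := by
    intro r hr
    have hz : hnorm r (fun _ => (1:ℝ)) = n := by
      simp [hnorm, Real.one_rpow]
    have hnpos : (0:ℝ) < n := by exact_mod_cast hn
    refine ⟨dil r (n:ℝ)⁻¹ (fun _ => (1:ℝ)), ?_⟩
    rw [hnorm_dil r hr (inv_pos.2 hnpos), hz, inv_mul_cancel₀ hnpos.ne']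
  obtain ⟨y0, hy0⟩ := hmemne r0 hr0
  have hy0S : y0 ∈ S0 := hy0
  have hne_of_mem0 : ∀ y ∈ S0, y ≠ 0 := by
    intro y hy h0
    exact hS0zero (h0 ▸ hy)
  have hne_of_memi : ∀ y ∈ Si, y ≠ 0 := by
    intro y hy h0
    exact hSizero (h0 ▸ hy)
  -- min of ζ0 on S0, max of φ0 on S0
  obtain ⟨a0, ha0S, ha0⟩ := hS0c.exists_isMinOn ⟨y0, hy0S⟩ hζ0c.continuousOn
  obtain ⟨b0, hb0S, hb0⟩ := hS0c.exists_isMaxOn ⟨y0, hy0S⟩ hφ0c.continuousOn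
  set m0 : ℝ := ζ0 a0 with hm0def
  have hm0 : 0 < m0 := hζ0pd.2 a0 (hne_of_mem0 a0 ha0S)
  set A0 : ℝ := max (φ0 b0) 0 + 1 with hA0def
  have hA0 : 0 < A0 := by positivity
  obtain ⟨lζ, hlζpos, Hζ⟩ := hζ0h S0 hS0c hS0zero (m0/2) (by positivity)
  obtain ⟨lφ, hlφpos, Hφ⟩ := hφ0h S0 hS0c hS0zero 1 one_pos
  set δ0 : ℝ := min (min lζ lφ) 1 with hδ0def
  have hδ0 : 0 < δ0 := lt_min (lt_min hlζpos hlφpos) one_pos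
  set c0 : ℝ := 2 * A0 / m0 with hc0def
  have hc0 : 0 < c0 := by positivity
  -- region near 0
  have H0 : ∀ x : Fin n → ℝ, x ≠ 0 → N0 x ≤ δ0 → φ x ≤ c0 * ζ x := by
    intro x hx hxle
    set l : ℝ := N0 x with hldef
    have hl : 0 < l := hnorm_pos r0 hr0 hx
    set y : Fin n → ℝ := dil r0 l⁻¹ x with hydef
    have hyS : y ∈ S0 := by
      show N0 y = 1
      rw [hydef, hN0def, hnorm_dil r0 hr0 (inv_pos.2 hl), ← hN0def, ← hldef,
        inv_mul_cancel₀ hl.ne']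
    have hxy : x = dil r0 l y := (dil_dil_inv r0 hl x).symm
    have hl1 : l ≤ 1 := le_trans hxle (min_le_right _ _)
    have hlζ' : l ≤ lζ := le_trans hxle (le_trans (min_le_left _ _) (min_le_left _ _))
    have hlφ' : l ≤ lφ := le_trans hxle (le_trans (min_le_left _ _) (min_le_right _ _))
    have h1 := Hζ y hyS l hl hlζ'
    have h2 := Hφ y hyS l hl hlφ'
    have hldζ : 0 < l ^ dζ0 := Real.rpow_pos_of_pos hl _
    have hldφ : 0 < l ^ dφ0 := Real.rpow_pos_of_pos hl _
    have hmin : m0 ≤ ζ0 y := isMinOn_iff.1 ha0 y hyS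
    have hmax : φ0 y ≤ max (φ0 b0) 0 := le_trans (isMaxOn_iff.1 hb0 y hyS) (le_max_left _ _)
    have hζx : m0 / 2 * l ^ dζ0 ≤ ζ x := by
      have hd : m0 / 2 ≤ ζ (dil r0 l y) / l ^ dζ0 := by
        have := (abs_le.1 h1).1
        linarith
      rw [hxy]
      exact (le_div_iff₀ hldζ).1 hd
    have hφx : φ x ≤ A0 * l ^ dφ0 := by
      have hd : φ (dil r0 l y) / l ^ dφ0 ≤ A0 := by
        have := (abs_le.1 h2).2
        rw [hA0def]
        linarith
      rw [hxy]
      exact (div_le_iff₀ hldφ).1 hd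
    have hre : l ^ dφ0 ≤ l ^ dζ0 := Real.rpow_le_rpow_of_exponent_ge hl hl1 hd0
    have h3 : A0 * l ^ dφ0 ≤ A0 * l ^ dζ0 := mul_le_mul_of_nonneg_left hre hA0.le
    have h4 : c0 * (m0 / 2 * l ^ dζ0) ≤ c0 * ζ x := mul_le_mul_of_nonneg_left hζx hc0.le
    have h5 : c0 * (m0 / 2 * l ^ dζ0) = A0 * l ^ dζ0 := by
      rw [hc0def]; field_simp
    calc φ x ≤ A0 * l ^ dφ0 := hφx
      _ ≤ A0 * l ^ dζ0 := h3
      _ = c0 * (m0 / 2 * l ^ dζ0) := h5.symm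
      _ ≤ c0 * ζ x := h4
  -- region near infinity
  obtain ⟨ai, haiS, hai⟩ := hSic.exists_isMinOn (hmemne rinf hrinf) hζinfc.continuousOn
  obtain ⟨bi, hbiS, hbi⟩ := hSic.exists_isMaxOn (hmemne rinf hrinf) hφinfc.continuousOn
  set mi : ℝ := ζinf ai with hmidef
  have hmi : 0 < mi := hζinfpd.2 ai (hne_of_memi ai haiS)
  set Ai : ℝ := max (φinf bi) 0 + 1 with hAidef
  have hAi : 0 < Ai := by positivity
  obtain ⟨lζi, hlζipos, Hζi⟩ := hζinfh Si hSic hSizero (mi/2) (by positivity)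
  obtain ⟨lφi, hlφipos, Hφi⟩ := hφinfh Si hSic hSizero 1 one_pos
  set Li : ℝ := max (max lζi lφi) 1 with hLidef
  have hLi1 : (1:ℝ) ≤ Li := le_max_right _ _
  have hLi : 0 < Li := lt_of_lt_of_le one_pos hLi1
  set ci : ℝ := 2 * Ai / mi with hcidef
  have hci : 0 < ci := by positivity
  have Hinf : ∀ x : Fin n → ℝ, x ≠ 0 → Li ≤ Ni x → φ x ≤ ci * ζ x := by
    intro x hx hxge
    set l : ℝ := Ni x with hldef
    have hl : 0 < l := hnorm_pos rinf hrinf hx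
    set y : Fin n → ℝ := dil rinf l⁻¹ x with hydef
    have hyS : y ∈ Si := by
      show Ni y = 1
      rw [hydef, hNidef, hnorm_dil rinf hrinf (inv_pos.2 hl), ← hNidef, ← hldef,
        inv_mul_cancel₀ hl.ne']
    have hxy : x = dil rinf l y := (dil_dil_inv rinf hl x).symm
    have hl1 : 1 ≤ l := le_trans hLi1 hxge
    have hlζ' : l ≥ lζi := le_trans (le_trans (le_max_left _ _) (le_max_left _ _)) hxge
    have hlφ' : l ≥ lφi := le_trans (le_trans (le_max_right _ _) (le_max_left _ _)) hxge
    have h1 := Hζi y hyS l hlζ'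
    have h2 := Hφi y hyS l hlφ'
    have hldζ : 0 < l ^ dζinf := Real.rpow_pos_of_pos hl _
    have hldφ : 0 < l ^ dφinf := Real.rpow_pos_of_pos hl _
    have hmin : mi ≤ ζinf y := isMinOn_iff.1 hai y hyS
    have hmax : φinf y ≤ max (φinf bi) 0 := le_trans (isMaxOn_iff.1 hbi y hyS) (le_max_left _ _)
    have hζx : mi / 2 * l ^ dζinf ≤ ζ x := by
      have hd : mi / 2 ≤ ζ (dil rinf l y) / l ^ dζinf := by
        have := (abs_le.1 h1).1
        linarith
      rw [hxy]
      exact (le_div_iff₀ hldζ).1 hd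
    have hφx : φ x ≤ Ai * l ^ dφinf := by
      have hd : φ (dil rinf l y) / l ^ dφinf ≤ Ai := by
        have := (abs_le.1 h2).2
        rw [hAidef]
        linarith
      rw [hxy]
      exact (div_le_iff₀ hldφ).1 hd
    have hre : l ^ dφinf ≤ l ^ dζinf := Real.rpow_le_rpow_of_exponent_le hl1 hdinf
    have h3 : Ai * l ^ dφinf ≤ Ai * l ^ dζinf := mul_le_mul_of_nonneg_left hre hAi.le
    have h4 : ci * (mi / 2 * l ^ dζinf) ≤ ci * ζ x := mul_le_mul_of_nonneg_left hζx hci.le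
    have h5 : ci * (mi / 2 * l ^ dζinf) = Ai * l ^ dζinf := by
      rw [hcidef]; field_simp
    calc φ x ≤ Ai * l ^ dφinf := hφx
      _ ≤ Ai * l ^ dζinf := h3
      _ = ci * (mi / 2 * l ^ dζinf) := h5.symm
      _ ≤ ci * ζ x := h4
  -- middle region
  set K : Set (Fin n → ℝ) := {x | δ0 ≤ N0 x ∧ Ni x ≤ Li} with hKdef
  have hKc : IsCompact K := by
    apply isCompact_of_sub rinf hrinf Li
    · exact IsClosed.inter (isClosed_le continuous_const (hnorm_continuous r0 hr0))
        (isClosed_le (hnorm_continuous rinf hrinf) continuous_const)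
    · exact fun x hx => hx.2
  have Hmid : ∃ cK > (0:ℝ), ∀ x ∈ K, φ x ≤ cK * ζ x := by
    rcases Set.eq_empty_or_nonempty K with hKe | hKne
    · exact ⟨1, one_pos, fun x hx => absurd (hKe ▸ hx) (Set.notMem_empty x)⟩
    · obtain ⟨aK, haKK, haK⟩ := hKc.exists_isMinOn hKne hζc.continuousOn
      obtain ⟨bK, hbKK, hbK⟩ := hKc.exists_isMaxOn hKne hφc.continuousOn
      have haKne : aK ≠ 0 := by
        intro h0
        have := haKK.1
        rw [h0] at this
        rw [hN0def, (hnorm_eq_zero r0 hr0 0).2 rfl] at this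
        linarith
      have hmK : 0 < ζ aK := hζpd.2 aK haKne
      set MK : ℝ := max (φ bK) 0 + 1 with hMKdef
      have hMK : 0 < MK := by positivity
      refine ⟨MK / ζ aK, by positivity, ?_⟩
      intro x hxK
      have h1 : φ x ≤ MK := le_trans (isMaxOn_iff.1 hbK x hxK)
        (by rw [hMKdef]; have := le_max_left (φ bK) 0; linarith)
      have h2 : ζ aK ≤ ζ x := isMinOn_iff.1 haK x hxK
      calc φ x ≤ MK := h1
        _ = MK / ζ aK * ζ aK := by field_simp
        _ ≤ MK / ζ aK * ζ x := mul_le_mul_of_nonneg_left h2 (by positivity)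
  obtain ⟨cK, hcK, HK⟩ := Hmid
  -- φ 0 ≤ 0
  have hφ0le : φ 0 ≤ 0 := by
    have htend : Tendsto (fun k : ℕ => dil r0 (δ0 / (k + 1)) y0) atTop (nhds 0) := by
      rw [tendsto_pi_nhds]
      intro i
      have h1 : Tendsto (fun k : ℕ => δ0 / (k + 1)) atTop (nhds 0) := by
        have := tendsto_one_div_add_atTop_nhds_zero_nat.const_mul δ0
        simpa [div_eq_mul_inv, mul_comm, mul_one_div] using this
      have h2 : Tendsto (fun k : ℕ => (δ0 / (k + 1)) ^ r0 i) atTop (nhds 0) := by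
        have hc : ContinuousAt (fun t : ℝ => t ^ r0 i) 0 :=
          Real.continuousAt_rpow_const 0 (r0 i) (Or.inr (hr0 i).le)
        have := hc.tendsto.comp h1
        simpa [Function.comp_def, Real.zero_rpow (hr0 i).ne'] using this
      have h3 := h2.mul_const (y0 i)
      rw [zero_mul] at h3
      simpa [dil] using h3
    have hφt : Tendsto (fun k : ℕ => φ (dil r0 (δ0 / (k + 1)) y0)) atTop (nhds (φ 0)) :=
      (hφc.tendsto 0).comp htend
    have hζt : Tendsto (fun k : ℕ => c0 * ζ (dil r0 (δ0 / (k + 1)) y0)) atTop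
        (nhds (c0 * 0)) := by
      have := ((hζc.tendsto 0).comp htend).const_mul c0
      rwa [hζpd.1] at this
    have hle : ∀ k : ℕ, φ (dil r0 (δ0 / (k + 1)) y0) ≤
        c0 * ζ (dil r0 (δ0 / (k + 1)) y0) := by
      intro k
      have hlk : 0 < δ0 / ((k:ℝ) + 1) := by positivity
      have hNk : N0 (dil r0 (δ0 / (k + 1)) y0) = δ0 / (k + 1) := by
        rw [hN0def, hnorm_dil r0 hr0 hlk, hy0, mul_one]
      apply H0
      · intro h0
        rw [h0, hN0def, (hnorm_eq_zero r0 hr0 0).2 rfl] at hNk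
        exact absurd hNk.symm hlk.ne'
      · rw [hNk]
        apply div_le_self hδ0.le
        have : (0:ℝ) ≤ (k:ℝ) := Nat.cast_nonneg k
        linarith
    have := le_of_tendsto_of_tendsto' hφt hζt hle
    linarith
  -- assemble
  set c : ℝ := max (max c0 ci) cK with hcdef
  have hcpos : 0 < c := lt_of_lt_of_le hc0 (le_trans (le_max_left _ _) (le_max_left _ _))
  have hc0le : c0 ≤ c := le_trans (le_max_left _ _) (le_max_left _ _)
  have hcile : ci ≤ c := le_trans (le_max_right _ _) (le_max_left _ _)
  have hcKle : cK ≤ c := le_max_right _ _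
  refine ⟨c, hcpos, ?_⟩
  intro x
  by_cases hx : x = 0
  · rw [hx, hζpd.1, mul_zero]
    exact hφ0le
  · rcases le_or_gt (N0 x) δ0 with h1 | h1
    · exact le_trans (H0 x hx h1) (mul_le_mul_of_nonneg_right hc0le (hζnn x))
    · rcases le_or_gt (Ni x) Li with h2 | h2
      · exact le_trans (HK x ⟨h1.le, h2⟩) (mul_le_mul_of_nonneg_right hcKle (hζnn x))
      · exact le_trans (Hinf x hx h2.le) (mul_le_mul_of_nonneg_right hcile (hζnn x))
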